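/- Monotonicity of class membership along the order (Corollary 1): Let φ be an STL formula with a classification criterion fixed as in the context, and let (ψ, σ) ∈ ⪯⁻(φ). Then for every signal w: if w ∈ V(ψ) then w ∈ V(σ), and if w ∉ V(σ) then w ∉ V(ψ). -/

import Mathlib

namespace STLClass

abbrev Signal (N : ℕ) := ℝ → Fin N → ℝ

def shift {N : ℕ} (w : Signal N) (t : ℝ) : Signal N := fun t' => w (t + t')

inductive STL (N : ℕ) : Type where
  | atom (f : (Fin N → ℝ) → ℝ)
  | falsum
  | not (φ : STL N)
  | and (φ₁ φ₂ : STL N)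
  | or (φ₁ φ₂ : STL N)
  | always (a b : ℝ) (φ : STL N)
  | event (a b : ℝ) (φ : STL N)
  | untl (a b : ℝ) (φ₁ φ₂ : STL N)

def STL.top {N : ℕ} : STL N := .not .falsum

noncomputable def robust {N : ℕ} : STL N → Signal N → EReal
  | .atom f, w => ((f (w 0) : ℝ) : EReal)
  | .falsum, _ => ⊥
  | .not φ, w => - robust φ w
  | .and φ₁ φ₂, w => min (robust φ₁ w) (robust φ₂ w)
  | .or φ₁ φ₂, w => max (robust φ₁ w) (robust φ₂ w)
  | .always a b φ, w => ⨅ t : Set.Icc a b, robust φ (shift w t.1)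
  | .event a b φ, w => ⨆ t : Set.Icc a b, robust φ (shift w t.1)
  | .untl a b φ₁ φ₂, w =>
      ⨆ t : Set.Icc a b,
        min (robust φ₂ (shift w t.1)) (⨅ t' : Set.Ico (0 : ℝ) t.1, robust φ₁ (shift w t'.1))

def Sat {N : ℕ} (w : Signal N) (φ : STL N) : Prop := 0 < robust φ w

def Vio {N : ℕ} (w : Signal N) (φ : STL N) : Prop := robust φ w < 0

/-- An STL formula together with a classification criterion: each temporal operator is
annotated with a natural number `k`, meaning that its interval is split into `k + 1`
consecutive segments (so the "positive integer" of the criterion is `k + 1`). -/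
inductive AForm (N : ℕ) : Type where
  | atom (f : (Fin N → ℝ) → ℝ)
  | falsum
  | not (φ : AForm N)
  | and (φ₁ φ₂ : AForm N)
  | or (φ₁ φ₂ : AForm N)
  | always (a b : ℝ) (k : ℕ) (φ : AForm N)
  | event (a b : ℝ) (k : ℕ) (φ : AForm N)
  | untl (a b : ℝ) (k : ℕ) (φ₁ φ₂ : AForm N)

/-- The underlying STL formula of an annotated formula. -/
def AForm.toSTL {N : ℕ} : AForm N → STL N
  | .atom f => .atom f
  | .falsum => .falsum
  | .not φ => .not φ.toSTL
  | .and φ₁ φ₂ => .and φ₁.toSTL φ₂.toSTL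
  | .or φ₁ φ₂ => .or φ₁.toSTL φ₂.toSTL
  | .always a b _ φ => .always a b φ.toSTL
  | .event a b _ φ => .event a b φ.toSTL
  | .untl a b _ φ₁ φ₂ => .untl a b φ₁.toSTL φ₂.toSTL

/-- Well-formedness: every temporal interval `[a, b]` satisfies `0 ≤ a < b`. -/
def AForm.WF {N : ℕ} : AForm N → Prop
  | .atom _ => True
  | .falsum => True
  | .not φ => φ.WF
  | .and φ₁ φ₂ => φ₁.WF ∧ φ₂.WF
  | .or φ₁ φ₂ => φ₁.WF ∧ φ₂.WF
  | .always a b _ φ => 0 ≤ a ∧ a < b ∧ φ.WF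
  | .event a b _ φ => 0 ≤ a ∧ a < b ∧ φ.WF
  | .untl a b _ φ₁ φ₂ => 0 ≤ a ∧ a < b ∧ φ₁.WF ∧ φ₂.WF

/-- A split of the interval `[a, b]` into `n` consecutive nonsingular segments:
`n + 1` strictly increasing points starting at `a` and ending at `b`.  The segment
`i` is `[pts i.castSucc, pts i.succ]`. -/
structure Split (a b : ℝ) (n : ℕ) : Type where
  pts : Fin (n + 1) → ℝ
  strictMono : StrictMono pts
  first : pts 0 = a
  last : pts (Fin.last n) = b

/-- The valuation space `Θ` of an annotated formula: a choice of admissible breakpoints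
for each temporal subformula. -/
def Val {N : ℕ} : AForm N → Type
  | .atom _ => PUnit
  | .falsum => PUnit
  | .not φ => Val φ
  | .and φ₁ φ₂ => Val φ₁ × Val φ₂
  | .or φ₁ φ₂ => Val φ₁ × Val φ₂
  | .always a b k φ => Split a b (k + 1) × Val φ
  | .event a b k φ => Split a b (k + 1) × Val φ
  | .untl a b k φ₁ φ₂ => Split a b (k + 1) × Val φ₁ × Val φ₂

/-- Finite conjunction of a list of STL formulas (empty conjunction is `⊤`). -/
def listAnd {N : ℕ} : List (STL N) → STL N
  | [] => STL.top
  | [φ] => φ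
  | φ :: φ' :: rest => .and φ (listAnd (φ' :: rest))

/-- Finite disjunction of a list of STL formulas (empty disjunction is `⊥`). -/
def listOr {N : ℕ} : List (STL N) → STL N
  | [] => .falsum
  | [φ] => φ
  | φ :: φ' :: rest => .or φ (listOr (φ' :: rest))

/-- `⋀_{i} f i`. -/
def iAnd {N : ℕ} {k : ℕ} (f : Fin k → STL N) : STL N := listAnd (List.ofFn f)

/-- `⋁_{i} f i`. -/
def iOr {N : ℕ} {k : ℕ} (f : Fin k → STL N) : STL N := listOr (List.ofFn f)

/-- `Cls true φ` is the set `Cls⁺(φ)` of satisfaction classes and `Cls false φ` is the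
set `Cls⁻(φ)` of violation classes; a class is represented by its instantiation map
`Θ → STL N` sending a valuation `θ` to the STL formula `ψ(θ)`. -/
def Cls {N : ℕ} : Bool → (φ : AForm N) → Set (Val φ → STL N)
  | b, .atom f =>
      {fun _ => if b then STL.falsum else STL.top, fun _ => STL.atom f}
  | _, .falsum => {fun _ => STL.falsum}
  | b, .not φ =>
      {c | ∃ ψ ∈ Cls (!b) φ, c = fun θ => STL.not (ψ θ)}
  | b, .and φ₁ φ₂ =>
      {c | ∃ ψ₁ ∈ Cls b φ₁, ∃ ψ₂ ∈ Cls b φ₂,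
        c = fun θ => STL.and (ψ₁ θ.1) (ψ₂ θ.2)}
  | b, .or φ₁ φ₂ =>
      {c | ∃ ψ₁ ∈ Cls b φ₁, ∃ ψ₂ ∈ Cls b φ₂,
        c = fun θ => STL.or (ψ₁ θ.1) (ψ₂ θ.2)}
  | b, .always _ _ k φ =>
      {c | ∃ ψ : Fin (k + 1) → Val φ → STL N, (∀ i, ψ i ∈ Cls b φ) ∧
        c = fun θ => iAnd fun i : Fin (k + 1) =>
          STL.always (θ.1.pts i.castSucc) (θ.1.pts i.succ) (ψ i θ.2)}
  | b, .event _ _ k φ =>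
      {c | ∃ ψ : Fin (k + 1) → Val φ → STL N, (∀ i, ψ i ∈ Cls b φ) ∧
        c = fun θ => iOr fun i : Fin (k + 1) =>
          STL.event (θ.1.pts i.castSucc) (θ.1.pts i.succ) (ψ i θ.2)}
  | b, .untl _ _ k φ₁ φ₂ =>
      {c | ∃ ψ : Fin (k + 1) → Val φ₁ → STL N, ∃ σ : Fin (k + 1) → Val φ₂ → STL N,
           ∃ ξ : Fin (k + 1) → Fin (k + 1) → Val φ₁ → STL N,
        (∀ i, ψ i ∈ Cls b φ₁) ∧ (∀ i, σ i ∈ Cls b φ₂) ∧ (∀ i j, ξ i j ∈ Cls b φ₁) ∧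
        c = fun θ => iOr fun i : Fin (k + 1) =>
          STL.and
            (STL.untl (θ.1.pts i.castSucc) (θ.1.pts i.succ) (ψ i θ.2.1) (σ i θ.2.2))
            (iAnd fun j : Fin (i : ℕ) =>
              STL.always (θ.1.pts (j.castLE i.isLt.le).castSucc)
                (θ.1.pts (j.castLE i.isLt.le).succ) (ξ i (j.castLE i.isLt.le) θ.2.1))}

/-- The satisfiable set `S(ψ)` of a class. -/
def SatSet {N : ℕ} (φ : AForm N) (ψ : Val φ → STL N) : Set (Signal N) :=
  {w | ∃ θ : Val φ, Sat w (ψ θ)}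

/-- The falsifiable set `V(ψ)` of a class. -/
def VioSet {N : ℕ} (φ : AForm N) (ψ : Val φ → STL N) : Set (Signal N) :=
  {w | ∃ θ : Val φ, Vio w (ψ θ)}


/-- `Pre true φ` is the relation `⪯⁺(φ)` and `Pre false φ` is the relation `⪯⁻(φ)`,
given as sets of pairs of classes. -/
def Pre {N : ℕ} : Bool → (φ : AForm N) → Set ((Val φ → STL N) × (Val φ → STL N))
  | b, .atom f =>
      { (fun _ => if b then STL.falsum else STL.top, fun _ => STL.atom f),
        (fun _ => STL.atom f, fun _ => STL.atom f),
        (fun _ => if b then STL.falsum else STL.top,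
         fun _ => if b then STL.falsum else STL.top) }
  | _, .falsum => {(fun _ => STL.falsum, fun _ => STL.falsum)}
  | b, .not φ =>
      {p | ∃ q ∈ Pre (!b) φ,
        p = (fun θ => STL.not (q.1 θ), fun θ => STL.not (q.2 θ))}
  | b, .and φ₁ φ₂ =>
      {p | ∃ q₁ ∈ Pre b φ₁, ∃ q₂ ∈ Pre b φ₂,
        p = (fun θ => STL.and (q₁.1 θ.1) (q₂.1 θ.2),
             fun θ => STL.and (q₁.2 θ.1) (q₂.2 θ.2))}
  | b, .or φ₁ φ₂ =>
      {p | ∃ q₁ ∈ Pre b φ₁, ∃ q₂ ∈ Pre b φ₂,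
        p = (fun θ => STL.or (q₁.1 θ.1) (q₂.1 θ.2),
             fun θ => STL.or (q₁.2 θ.1) (q₂.2 θ.2))}
  | b, .always _ _ k φ =>
      {p | ∃ ψ σ : Fin (k + 1) → Val φ → STL N, (∀ i, (ψ i, σ i) ∈ Pre b φ) ∧
        p = (fun θ => iAnd fun i : Fin (k + 1) =>
               STL.always (θ.1.pts i.castSucc) (θ.1.pts i.succ) (ψ i θ.2),
             fun θ => iAnd fun i : Fin (k + 1) =>
               STL.always (θ.1.pts i.castSucc) (θ.1.pts i.succ) (σ i θ.2))}
  | b, .event _ _ k φ =>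
      {p | ∃ ψ σ : Fin (k + 1) → Val φ → STL N, (∀ i, (ψ i, σ i) ∈ Pre b φ) ∧
        p = (fun θ => iOr fun i : Fin (k + 1) =>
               STL.event (θ.1.pts i.castSucc) (θ.1.pts i.succ) (ψ i θ.2),
             fun θ => iOr fun i : Fin (k + 1) =>
               STL.event (θ.1.pts i.castSucc) (θ.1.pts i.succ) (σ i θ.2))}
  | b, .untl _ _ k φ₁ φ₂ =>
      {p | ∃ ψ ψ' : Fin (k + 1) → Val φ₁ → STL N,
           ∃ σ σ' : Fin (k + 1) → Val φ₂ → STL N,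
           ∃ ξ ξ' : Fin (k + 1) → Fin (k + 1) → Val φ₁ → STL N,
        (∀ i, (ψ i, ψ' i) ∈ Pre b φ₁) ∧ (∀ i, (σ i, σ' i) ∈ Pre b φ₂) ∧
        (∀ i j, (ξ i j, ξ' i j) ∈ Pre b φ₁) ∧
        p = (fun θ => iOr fun i : Fin (k + 1) =>
               STL.and
                 (STL.untl (θ.1.pts i.castSucc) (θ.1.pts i.succ) (ψ i θ.2.1) (σ i θ.2.2))
                 (iAnd fun j : Fin (i : ℕ) =>
                   STL.always (θ.1.pts (j.castLE i.isLt.le).castSucc)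
                     (θ.1.pts (j.castLE i.isLt.le).succ) (ξ i (j.castLE i.isLt.le) θ.2.1)),
             fun θ => iOr fun i : Fin (k + 1) =>
               STL.and
                 (STL.untl (θ.1.pts i.castSucc) (θ.1.pts i.succ) (ψ' i θ.2.1) (σ' i θ.2.2))
                 (iAnd fun j : Fin (i : ℕ) =>
                   STL.always (θ.1.pts (j.castLE i.isLt.le).castSucc)
                     (θ.1.pts (j.castLE i.isLt.le).succ) (ξ' i (j.castLE i.isLt.le) θ.2.1)))}



/-- Auxiliary order relation: `≤` if `b = true`, `≥` otherwise. -/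
def R (b : Bool) (x y : EReal) : Prop := if b then x ≤ y else y ≤ x

lemma R_refl (b : Bool) (x : EReal) : R b x x := by cases b <;> simp [R]

lemma R_neg {b : Bool} {x y : EReal} (h : R (!b) x y) : R b (-x) (-y) := by
  cases b
  · exact EReal.neg_le_neg_iff.mpr h
  · exact EReal.neg_le_neg_iff.mpr h

lemma R_min {b : Bool} {x₁ x₂ y₁ y₂ : EReal} (h₁ : R b x₁ y₁) (h₂ : R b x₂ y₂) :
    R b (min x₁ x₂) (min y₁ y₂) := by
  cases b
  · exact min_le_min h₁ h₂
  · exact min_le_min h₁ h₂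

lemma R_max {b : Bool} {x₁ x₂ y₁ y₂ : EReal} (h₁ : R b x₁ y₁) (h₂ : R b x₂ y₂) :
    R b (max x₁ x₂) (max y₁ y₂) := by
  cases b
  · exact max_le_max h₁ h₂
  · exact max_le_max h₁ h₂

lemma R_iInf {b : Bool} {ι : Sort*} {f g : ι → EReal} (h : ∀ i, R b (f i) (g i)) :
    R b (⨅ i, f i) (⨅ i, g i) := by
  cases b
  · exact iInf_mono h
  · exact iInf_mono h

lemma R_iSup {b : Bool} {ι : Sort*} {f g : ι → EReal} (h : ∀ i, R b (f i) (g i)) :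
    R b (⨆ i, f i) (⨆ i, g i) := by
  cases b
  · exact iSup_mono h
  · exact iSup_mono h

lemma ereal_iInf_fin_succ {n : ℕ} (f : Fin (n + 1) → EReal) :
    ⨅ i, f i = min (f 0) (⨅ i : Fin n, f i.succ) := by
  apply le_antisymm
  · exact le_min (iInf_le _ 0) (le_iInf fun i => iInf_le _ i.succ)
  · refine le_iInf fun i => ?_
    induction i using Fin.cases with
    | zero => exact min_le_left _ _
    | succ j => exact (min_le_right _ _).trans (iInf_le _ j)

lemma ereal_iSup_fin_succ {n : ℕ} (f : Fin (n + 1) → EReal) :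
    ⨆ i, f i = max (f 0) (⨆ i : Fin n, f i.succ) := by
  apply le_antisymm
  · refine iSup_le fun i => ?_
    induction i using Fin.cases with
    | zero => exact le_max_left _ _
    | succ j => exact (le_iSup (fun j : Fin n => f j.succ) j).trans (le_max_right _ _)
  · exact max_le (le_iSup _ 0) (iSup_le fun i => le_iSup _ i.succ)

lemma listAnd_cons {N : ℕ} (a : STL N) (l : List (STL N)) (h : l ≠ []) :
    listAnd (a :: l) = .and a (listAnd l) := by
  cases l with
  | nil => exact absurd rfl h
  | cons b t => rfl

lemma listOr_cons {N : ℕ} (a : STL N) (l : List (STL N)) (h : l ≠ []) :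
    listOr (a :: l) = .or a (listOr l) := by
  cases l with
  | nil => exact absurd rfl h
  | cons b t => rfl

lemma robust_iAnd {N k : ℕ} (f : Fin k → STL N) (w : Signal N) :
    robust (iAnd f) w = ⨅ i, robust (f i) w := by
  induction k with
  | zero =>
    simp only [iAnd, List.ofFn_zero, listAnd, STL.top, robust]
    rw [iInf_of_empty]
    simp
  | succ k ih =>
    cases k with
    | zero =>
      simp only [iAnd, List.ofFn_succ, List.ofFn_zero, listAnd]
      exact (iInf_unique fun i : Fin 1 => robust (f i) w).symm
    | succ m =>
      rw [iAnd, List.ofFn_succ, listAnd_cons _ _ (by simp),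
        ereal_iInf_fin_succ fun i => robust (f i) w]
      simp only [robust]
      congr 1
      exact ih fun i => f i.succ

lemma robust_iOr {N k : ℕ} (f : Fin k → STL N) (w : Signal N) :
    robust (iOr f) w = ⨆ i, robust (f i) w := by
  induction k with
  | zero =>
    simp only [iOr, List.ofFn_zero, listOr, robust]
    rw [iSup_of_empty]
  | succ k ih =>
    cases k with
    | zero =>
      simp only [iOr, List.ofFn_succ, List.ofFn_zero, listOr]
      exact (iSup_unique fun i : Fin 1 => robust (f i) w).symm
    | succ m =>
      rw [iOr, List.ofFn_succ, listOr_cons _ _ (by simp),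
        ereal_iSup_fin_succ fun i => robust (f i) w]
      simp only [robust]
      congr 1
      exact ih fun i => f i.succ

lemma pre_robust {N : ℕ} (φ : AForm N) : ∀ (b : Bool) (ψ σ : Val φ → STL N),
    (ψ, σ) ∈ Pre b φ → ∀ (θ : Val φ) (w : Signal N),
      R b (robust (ψ θ) w) (robust (σ θ) w) := by
  induction φ with
  | atom f =>
    intro b ψ σ h θ w
    simp only [Pre, Set.mem_insert_iff, Set.mem_singleton_iff, Prod.mk.injEq] at h
    rcases h with ⟨h1, h2⟩ | ⟨h1, h2⟩ | ⟨h1, h2⟩ <;> subst h1 <;> subst h2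
    · cases b
      · simp [R, robust, STL.top]
      · simp [R, robust]
    · exact R_refl _ _
    · exact R_refl _ _
  | falsum =>
    intro b ψ σ h θ w
    simp only [Pre, Set.mem_singleton_iff, Prod.mk.injEq] at h
    rcases h with ⟨h1, h2⟩; subst h1; subst h2
    exact R_refl _ _
  | not φ ih =>
    intro b ψ σ h θ w
    obtain ⟨q, hq, heq⟩ := h
    replace heq := Prod.mk.inj heq
    obtain ⟨h1, h2⟩ := heq; subst h1; subst h2
    simp only [robust]
    exact R_neg (ih (!b) q.1 q.2 hq θ w)
  | and φ₁ φ₂ ih₁ ih₂ =>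
    intro b ψ σ h θ w
    obtain ⟨q₁, hq₁, q₂, hq₂, heq⟩ := h
    replace heq := Prod.mk.inj heq
    obtain ⟨h1, h2⟩ := heq; subst h1; subst h2
    simp only [robust]
    exact R_min (ih₁ b q₁.1 q₁.2 hq₁ θ.1 w) (ih₂ b q₂.1 q₂.2 hq₂ θ.2 w)
  | or φ₁ φ₂ ih₁ ih₂ =>
    intro b ψ σ h θ w
    obtain ⟨q₁, hq₁, q₂, hq₂, heq⟩ := h
    replace heq := Prod.mk.inj heq
    obtain ⟨h1, h2⟩ := heq; subst h1; subst h2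
    simp only [robust]
    exact R_max (ih₁ b q₁.1 q₁.2 hq₁ θ.1 w) (ih₂ b q₂.1 q₂.2 hq₂ θ.2 w)
  | always a b' k φ ih =>
    intro b ψ σ h θ w
    obtain ⟨ψ', σ', hmem, heq⟩ := h
    replace heq := Prod.mk.inj heq
    obtain ⟨h1, h2⟩ := heq; subst h1; subst h2
    rw [robust_iAnd, robust_iAnd]
    refine R_iInf fun i => ?_
    simp only [robust]
    exact R_iInf fun t => ih b (ψ' i) (σ' i) (hmem i) θ.2 _
  | event a b' k φ ih =>
    intro b ψ σ h θ w
    obtain ⟨ψ', σ', hmem, heq⟩ := h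
    replace heq := Prod.mk.inj heq
    obtain ⟨h1, h2⟩ := heq; subst h1; subst h2
    rw [robust_iOr, robust_iOr]
    refine R_iSup fun i => ?_
    simp only [robust]
    exact R_iSup fun t => ih b (ψ' i) (σ' i) (hmem i) θ.2 _
  | untl a b' k φ₁ φ₂ ih₁ ih₂ =>
    intro b ψ σ h θ w
    obtain ⟨p1, p1', s1, s1', x1, x1', hψ, hσ, hξ, heq⟩ := h
    replace heq := Prod.mk.inj heq
    obtain ⟨h1, h2⟩ := heq; subst h1; subst h2
    rw [robust_iOr, robust_iOr]
    refine R_iSup fun i => ?_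
    simp only [robust]
    refine R_min ?_ ?_
    · refine R_iSup fun t => ?_
      refine R_min (ih₂ b (s1 i) (s1' i) (hσ i) θ.2.2 _) ?_
      exact R_iInf fun t' => ih₁ b (p1 i) (p1' i) (hψ i) θ.2.1 _
    · rw [robust_iAnd, robust_iAnd]
      refine R_iInf fun j => ?_
      simp only [robust]
      exact R_iInf fun t =>
        ih₁ b (x1 i (j.castLE i.isLt.le)) (x1' i (j.castLE i.isLt.le))
          (hξ i (j.castLE i.isLt.le)) θ.2.1 _

/-- Monotonicity of class membership along the order (Corollary 1): if
`(ψ, σ) ∈ ⪯⁻(φ)` then for every signal `w`, `w ∈ V(ψ)` implies `w ∈ V(σ)`, and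
`w ∉ V(σ)` implies `w ∉ V(ψ)`. -/
theorem pre_vio_monotone {N : ℕ} (φ : AForm N) (hφ : φ.WF)
    (ψ σ : Val φ → STL N) (h : (ψ, σ) ∈ Pre false φ) (w : Signal N) :
    (w ∈ VioSet φ ψ → w ∈ VioSet φ σ) ∧ (w ∉ VioSet φ σ → w ∉ VioSet φ ψ) := by
  have key := pre_robust φ false ψ σ h
  constructor
  · rintro ⟨θ, hθ⟩
    refine ⟨θ, lt_of_le_of_lt ?_ hθ⟩
    simpa [R] using key θ w
  · intro hσ hψ
    rcases hψ with ⟨θ, hθ⟩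
    exact hσ ⟨θ, lt_of_le_of_lt (by simpa [R] using key θ w) hθ⟩

end STLClass
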